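/- Let G be a basic CUH graph. If both D and D̃ are realized in G (i.e., both occur as induced subgraphs of G), then G is piecewise ultrahomogeneous, i.e., for every maximal red clique M_R and every maximal blue clique M_B, the induced subgraph G[M_R ∪ M_B] is ultrahomogeneous. -/
import Mathlib


open SimpleGraph

/-- A partial colored isomorphism of the 2-colored graph `(G, red)`, defined on the set `S`:
an injective map preserving colors and adjacency on `S`. -/
def IsPartialIso {V : Type} (G : SimpleGraph V) (red : V → Prop) (S : Set V) (f : V → V) :
    Prop :=
  Set.InjOn f S ∧ (∀ v ∈ S, (red (f v) ↔ red v)) ∧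
    ∀ u ∈ S, ∀ v ∈ S, (G.Adj (f u) (f v) ↔ G.Adj u v)

/-- A 2-colored graph is ultrahomogeneous if every isomorphism between two finite induced
colored subgraphs extends to a color-preserving automorphism. -/
def Ultrahomogeneous {V : Type} (G : SimpleGraph V) (red : V → Prop) : Prop :=
  ∀ S : Set V, S.Finite → ∀ f : V → V, IsPartialIso G red S f →
    ∃ ψ : G ≃g G, (∀ v, red (ψ v) ↔ red v) ∧ ∀ v ∈ S, ψ v = f v

/-- The set `P` induces a disjoint union of cliques in `G` (no induced monochromatic `P₃`). -/
def IsUnionOfCliques {V : Type} (G : SimpleGraph V) (P : Set V) : Prop :=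
  ∀ u ∈ P, ∀ v ∈ P, ∀ w ∈ P, G.Adj u v → G.Adj v w → u ≠ w → G.Adj u w

/-- `M` is an inclusion-wise maximal clique of the subgraph of `G` induced on `P`. -/
def IsMaxCliqueIn {V : Type} (G : SimpleGraph V) (P : Set V) (M : Set V) : Prop :=
  M ⊆ P ∧ G.IsClique M ∧ ∀ M' : Set V, M' ⊆ P → G.IsClique M' → M ⊆ M' → M = M'

/-- `S` is an independent set in `G`. -/
def IsIndepIn {V : Type} (G : SimpleGraph V) (S : Set V) : Prop :=
  ∀ u ∈ S, ∀ v ∈ S, ¬ G.Adj u v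

/-- The 2-colored graph `(H, redH)` is realized in `(G, red)`, i.e. isomorphic to an
induced colored subgraph of `G`. -/
def Realizes {V : Type} (G : SimpleGraph V) (red : V → Prop) {W : Type} (H : SimpleGraph W)
    (redH : W → Prop) : Prop :=
  ∃ f : W → V, Function.Injective f ∧ (∀ w, red (f w) ↔ redH w) ∧
    ∀ u w : W, G.Adj (f u) (f w) ↔ H.Adj u w

/-- `(H, redH)` is minimally omitted in `(G, red)`: it is omitted, but every proper induced
subgraph of it is realized. -/
def MinOmitted {V : Type} (G : SimpleGraph V) (red : V → Prop) {W : Type} (H : SimpleGraph W)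
    (redH : W → Prop) : Prop :=
  ¬ Realizes G red H redH ∧
    ∀ S : Set W, S ≠ Set.univ → Realizes G red (H.induce S) (fun x => redH x.1)

/-- Isomorphism of 2-colored graphs. -/
def ColoredIso {V : Type} (G : SimpleGraph V) (red : V → Prop) {W : Type} (H : SimpleGraph W)
    (redH : W → Prop) : Prop :=
  ∃ e : G ≃g H, ∀ v, red v ↔ redH (e v)

/-- The graph obtained from `G` by complementing the cross edges while keeping the
edges inside each color class. -/
def crossComp {V : Type} (G : SimpleGraph V) (red : V → Prop) : SimpleGraph V :=
  SimpleGraph.fromRel (fun u v =>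
    ((red u ↔ red v) ∧ G.Adj u v) ∨ (¬ (red u ↔ red v) ∧ ¬ G.Adj u v))

/-- The blow-up of the 2-colored graph `(H, redH)` (whose red class should be independent),
replacing every red vertex by a copy of `I` forming a clique, joined to the neighbors of the
original vertex. -/
def blowUp {V : Type} (H : SimpleGraph V) (redH : V → Prop) (I : Type) :
    SimpleGraph ({v : V // redH v} × I ⊕ {v : V // ¬ redH v}) :=
  SimpleGraph.fromRel (fun x y =>
    match x, y with
    | Sum.inl (u, i), Sum.inl (u', i') => H.Adj u.1 u'.1 ∨ (u = u' ∧ i ≠ i')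
    | Sum.inl (u, _), Sum.inr b => H.Adj u.1 b.1
    | Sum.inr b, Sum.inl (u, _) => H.Adj b.1 u.1
    | Sum.inr b, Sum.inr b' => H.Adj b.1 b'.1)

/-- The coloring of the blow-up: all vertices replacing red vertices are red. -/
def blowUpRed (V : Type) (redH : V → Prop) (I : Type) :
    ({v : V // redH v} × I ⊕ {v : V // ¬ redH v}) → Prop :=
  Sum.elim (fun _ => True) (fun _ => False)

/-- `(G, red)` is a blow-up with the red class blown up: it is isomorphic (as a colored graph)
to the blow-up of some `(H, redH)` with independent red class by an `i`-clique, `2 ≤ i ≤ ℵ₀`. -/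
def IsBlowUpOf {V : Type} (G : SimpleGraph V) (red : V → Prop) : Prop :=
  ∃ (U : Type) (H : SimpleGraph U) (redH : U → Prop) (I : Type),
    (∀ u v : U, redH u → redH v → ¬ H.Adj u v) ∧
    2 ≤ Cardinal.mk I ∧ Cardinal.mk I ≤ Cardinal.aleph0 ∧
    ∃ e : G ≃g blowUp H redH I, ∀ v, red v ↔ blowUpRed U redH I (e v)

/-- `(G, red)` is a blow-up (of one of its two color classes). -/
def IsBlowUp {V : Type} (G : SimpleGraph V) (red : V → Prop) : Prop :=
  IsBlowUpOf G red ∨ IsBlowUpOf G (fun v => ¬ red v)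

/-- A CUH graph: a countably infinite ultrahomogeneous 2-colored graph in which both
color classes induce disjoint unions of cliques. -/
def IsCUH {V : Type} (G : SimpleGraph V) (red : V → Prop) : Prop :=
  Countable V ∧ Infinite V ∧ Ultrahomogeneous G red ∧
    IsUnionOfCliques G {v | red v} ∧ IsUnionOfCliques G {v | ¬ red v}

/-- A basic CUH graph: a CUH graph which is not a blow-up and where both independence
numbers are at least 2. -/
def IsBasicCUH {V : Type} (G : SimpleGraph V) (red : V → Prop) : Prop :=
  IsCUH G red ∧ ¬ IsBlowUp G red ∧
    (∃ u v, red u ∧ red v ∧ u ≠ v ∧ ¬ G.Adj u v) ∧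
    (∃ u v, ¬ red u ∧ ¬ red v ∧ u ≠ v ∧ ¬ G.Adj u v)

/-- The graph `D`: red vertices `0, 1`, blue vertices `2, 3`, edges
`{01, 23, 02, 03, 12}` (a 2-colored diamond). -/
def Dgraph : SimpleGraph (Fin 4) :=
  SimpleGraph.fromRel (fun x y =>
    (x = 0 ∧ y = 1) ∨ (x = 2 ∧ y = 3) ∨ (x = 0 ∧ y = 2) ∨ (x = 0 ∧ y = 3) ∨ (x = 1 ∧ y = 2))

/-- The coloring of `D` and `D̃`: `0, 1` are red, `2, 3` are blue. -/
def Dred : Fin 4 → Prop := fun x => x = 0 ∨ x = 1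

/-- The graph `D̃`, the cross-edge complement of `D`: the path `0 – 1 – 3 – 2`. -/
def Dtilde : SimpleGraph (Fin 4) :=
  SimpleGraph.fromRel (fun x y => (x = 0 ∧ y = 1) ∨ (x = 1 ∧ y = 3) ∨ (x = 3 ∧ y = 2))

/-- `T_r`: the triangle with two red vertices and one blue vertex. -/
def Tr : SimpleGraph (Fin 3) := ⊤

/-- The coloring of `T_r` and `T̃_r`: `0, 1` red, `2` blue. -/
def TrRed : Fin 3 → Prop := fun x => x = 0 ∨ x = 1

/-- `T̃_r`: a red edge together with an isolated blue vertex. -/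
def TrTilde : SimpleGraph (Fin 3) := SimpleGraph.fromRel (fun x y => x = 0 ∧ y = 1)

/-- `T_b`: the triangle with one red vertex and two blue vertices. -/
def Tb : SimpleGraph (Fin 3) := ⊤

/-- The coloring of `T_b` and `T̃_b`: `0` red, `1, 2` blue. -/
def TbRed : Fin 3 → Prop := fun x => x = 0

/-- `T̃_b`: a blue edge together with an isolated red vertex. -/
def TbTilde : SimpleGraph (Fin 3) := SimpleGraph.fromRel (fun x y => x = 1 ∧ y = 2)


section Aux

variable {V : Type} {G : SimpleGraph V} {red : V → Prop}

/-- A concrete witness of a realized copy of `D`. -/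
def DWit (G : SimpleGraph V) (red : V → Prop) : Prop :=
  ∃ a b c d : V, red a ∧ red b ∧ ¬ red c ∧ ¬ red d ∧
    G.Adj a b ∧ G.Adj c d ∧ G.Adj a c ∧ G.Adj a d ∧ G.Adj b c ∧ ¬ G.Adj b d

lemma dwit_swap (h : DWit G red) : DWit G (fun v => ¬ red v) := by
  obtain ⟨a, b, c, d, ha, hb, hc, hd, hab, hcd, hac, had, hbc, hbd⟩ := h
  exact ⟨c, d, a, b, hc, hd, not_not_intro ha, not_not_intro hb, hcd, hab,
    hac.symm, hbc.symm, had.symm, fun h' => hbd h'.symm⟩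

lemma dwit_of_realizes (hD : Realizes G red Dgraph Dred) : DWit G red := by
  obtain ⟨g, hinj, hcol, hadj⟩ := hD
  have h01 : Dgraph.Adj 0 1 := by simp only [Dgraph, SimpleGraph.fromRel_adj]; decide
  have h23 : Dgraph.Adj 2 3 := by simp only [Dgraph, SimpleGraph.fromRel_adj]; decide
  have h02 : Dgraph.Adj 0 2 := by simp only [Dgraph, SimpleGraph.fromRel_adj]; decide
  have h03 : Dgraph.Adj 0 3 := by simp only [Dgraph, SimpleGraph.fromRel_adj]; decide
  have h12 : Dgraph.Adj 1 2 := by simp only [Dgraph, SimpleGraph.fromRel_adj]; decide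
  have h13 : ¬ Dgraph.Adj 1 3 := by simp only [Dgraph, SimpleGraph.fromRel_adj]; decide
  refine ⟨g 0, g 1, g 2, g 3, (hcol 0).mpr (Or.inl rfl), (hcol 1).mpr (Or.inr rfl),
    ?_, ?_, (hadj 0 1).mpr h01, (hadj 2 3).mpr h23, (hadj 0 2).mpr h02,
    (hadj 0 3).mpr h03, (hadj 1 2).mpr h12, fun h => h13 ((hadj 1 3).mp h)⟩
  · intro h
    rcases (hcol 2).mp h with h' | h' <;> exact absurd h' (by decide)
  · intro h
    rcases (hcol 3).mp h with h' | h' <;> exact absurd h' (by decide)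

end Aux

section Aux2

variable {V : Type} {G : SimpleGraph V} {red : V → Prop}

lemma mem_max_iff {P M : Set V} (hU : IsUnionOfCliques G P) (hM : IsMaxCliqueIn G P M)
    {r : V} (hr : r ∈ M) (v : V) : v ∈ M ↔ v ∈ P ∧ (v = r ∨ G.Adj v r) := by
  have hC : M = {v | v ∈ P ∧ (v = r ∨ G.Adj v r)} := by
    apply hM.2.2
    · rintro v ⟨hv, _⟩
      exact hv
    · rintro u ⟨hu, hu'⟩ w ⟨hw, hw'⟩ hne
      rcases hu' with rfl | hu'
      · rcases hw' with rfl | hw'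
        · exact absurd rfl hne
        · exact hw'.symm
      · rcases hw' with rfl | hw'
        · exact hu'
        · exact hU u hu r (hM.1 hr) w hw hu' hw'.symm hne
    · intro v hv
      refine ⟨hM.1 hv, ?_⟩
      by_cases h : v = r
      · exact Or.inl h
      · exact Or.inr (hM.2.1 hv hr h)
  rw [hC]; rfl

lemma max_nonempty {P M : Set V} (hM : IsMaxCliqueIn G P M) {x : V} (hx : x ∈ P) :
    M.Nonempty := by
  rcases M.eq_empty_or_nonempty with rfl | h
  · exfalso
    have h2 := hM.2.2 {x} (by simpa using hx) (Set.pairwise_singleton x G.Adj)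
      (Set.empty_subset _)
    exact (Set.singleton_ne_empty x) h2.symm
  · exact h

lemma pres_of_fix {P M : Set V} (hU : IsUnionOfCliques G P) (hM : IsMaxCliqueIn G P M)
    (ψ : G ≃g G) (hP : ∀ v, v ∈ P ↔ ψ v ∈ P) {x : V} (hx : x ∈ M) (hfix : ψ x ∈ M)
    (v : V) : v ∈ M ↔ ψ v ∈ M := by
  rw [mem_max_iff hU hM hx v, mem_max_iff hU hM hfix (ψ v)]
  constructor
  · rintro ⟨hv, h⟩
    refine ⟨(hP v).mp hv, ?_⟩
    rcases h with rfl | h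
    · exact Or.inl rfl
    · exact Or.inr (ψ.map_adj_iff.mpr h)
  · rintro ⟨hv, h⟩
    refine ⟨(hP v).mpr hv, ?_⟩
    rcases h with h | h
    · exact Or.inl (ψ.toEquiv.injective h)
    · exact Or.inr (ψ.map_adj_iff.mp h)

lemma ultra_not (h : Ultrahomogeneous G red) : Ultrahomogeneous G (fun v => ¬ red v) := by
  intro S hS f hf
  obtain ⟨ψ, hc, hag⟩ := h S hS f ⟨hf.1, fun v hv => not_iff_not.mp (hf.2.1 v hv), hf.2.2⟩
  exact ⟨ψ, fun v => not_iff_not.mpr (hc v), hag⟩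

lemma key2core {MR : Set V}
    (hUH : Ultrahomogeneous G red) (hUR : IsUnionOfCliques G {v | red v})
    (hMR : IsMaxCliqueIn G {v | red v} MR) (hW : DWit G red)
    {r0 p q : V} (hr0 : r0 ∈ MR) (hp : ¬ red p) (hq : ¬ red q) (hpq : G.Adj p q)
    (h1 : G.Adj r0 p) (h2 : ¬ G.Adj r0 q) :
    ∃ r ∈ MR, G.Adj r p ∧ G.Adj r q := by
  classical
  obtain ⟨x0, x1, x2, x3, c0, c1, c2, c3, a01, a23, a02, a03, a12, a13⟩ := hW
  have hr0red : red r0 := hMR.1 hr0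
  have n21 : x2 ≠ x1 := a12.ne'
  have n31 : x3 ≠ x1 := fun h => c3 (by rw [h]; exact c1)
  have n32 : x3 ≠ x2 := a23.ne'
  set S0 : Set V := insert x1 (insert x2 {x3}) with hS0
  set f0 : V → V := fun v => if v = x1 then r0 else if v = x2 then p else q with hf0
  have v1 : f0 x1 = r0 := by simp [hf0]
  have v2 : f0 x2 = p := by simp [hf0, n21]
  have v3 : f0 x3 = q := by simp [hf0, n31, n32]
  have hmem : ∀ u ∈ S0, u = x1 ∨ u = x2 ∨ u = x3 := by
    intro u hu
    simpa [hS0, Set.mem_insert_iff] using hu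
  have hPI : IsPartialIso G red S0 f0 := by
    refine ⟨?_, ?_, ?_⟩
    · intro u hu v hv huv
      rcases hmem u hu with rfl | rfl | rfl <;> rcases hmem v hv with rfl | rfl | rfl
      · rfl
      · rw [v1, v2] at huv; exact absurd (huv ▸ hr0red) hp
      · rw [v1, v3] at huv; exact absurd (huv ▸ hr0red) hq
      · rw [v2, v1] at huv; exact absurd (huv.symm ▸ hr0red) hp
      · rfl
      · rw [v2, v3] at huv; exact absurd huv hpq.ne
      · rw [v3, v1] at huv; exact absurd (huv.symm ▸ hr0red) hq
      · rw [v3, v2] at huv; exact absurd huv.symm hpq.ne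
      · rfl
    · intro v hv
      rcases hmem v hv with rfl | rfl | rfl
      · rw [v1]; exact iff_of_true hr0red c1
      · rw [v2]; exact iff_of_false hp c2
      · rw [v3]; exact iff_of_false hq c3
    · intro u hu v hv
      rcases hmem u hu with rfl | rfl | rfl <;> rcases hmem v hv with rfl | rfl | rfl
      · rw [v1]; exact iff_of_false (G.irrefl) (G.irrefl)
      · rw [v1, v2]; exact iff_of_true h1 a12
      · rw [v1, v3]; exact iff_of_false h2 a13
      · rw [v2, v1]
        exact iff_of_true h1.symm a12.symm
      · rw [v2]; exact iff_of_false (G.irrefl) (G.irrefl)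
      · rw [v2, v3]; exact iff_of_true hpq a23
      · rw [v3, v1]
        exact iff_of_false (fun h => h2 h.symm) (fun h => a13 h.symm)
      · rw [v3, v2]; exact iff_of_true hpq.symm a23.symm
      · rw [v3]; exact iff_of_false (G.irrefl) (G.irrefl)
  have hfin : S0.Finite := (Set.finite_singleton x3).insert x2 |>.insert x1
  obtain ⟨ψ, hc, hag⟩ := hUH S0 hfin f0 hPI
  have e1 : ψ x1 = r0 := by rw [hag x1 (by simp [hS0]), v1]
  have e2 : ψ x2 = p := by rw [hag x2 (by simp [hS0]), v2]
  have e3 : ψ x3 = q := by rw [hag x3 (by simp [hS0]), v3]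
  refine ⟨ψ x0, ?_, ?_, ?_⟩
  · rw [mem_max_iff hUR hMR hr0 (ψ x0)]
    refine ⟨(hc x0).mpr c0, Or.inr ?_⟩
    rw [← e1]; exact ψ.map_adj_iff.mpr a01
  · rw [← e2]; exact ψ.map_adj_iff.mpr a02
  · rw [← e3]; exact ψ.map_adj_iff.mpr a03

lemma key2 {MR MB : Set V}
    (hUH : Ultrahomogeneous G red) (hUR : IsUnionOfCliques G {v | red v})
    (hMR : IsMaxCliqueIn G {v | red v} MR) (hMB : IsMaxCliqueIn G {v | ¬ red v} MB)
    (hW : DWit G red) {b b' : V} (hb : b ∈ MB) (hb' : b' ∈ MB) :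
    ∃ r ∈ MR, (G.Adj r b ↔ G.Adj r b') := by
  have hred0 : red (Classical.choose hW) := (Classical.choose_spec hW).choose_spec.choose_spec.choose_spec.1
  obtain ⟨r0, hr0⟩ : MR.Nonempty := max_nonempty hMR (show Classical.choose hW ∈ {v | red v} from hred0)
  by_cases hiff : G.Adj r0 b ↔ G.Adj r0 b'
  · exact ⟨r0, hr0, hiff⟩
  · have hbb' : b ≠ b' := by rintro rfl; exact hiff Iff.rfl
    have habb' : G.Adj b b' := hMB.2.1 hb hb' hbb'
    by_cases hA : G.Adj r0 b
    · have hB : ¬ G.Adj r0 b' := fun h => hiff (iff_of_true hA h)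
      obtain ⟨r, hrMR, h1, h2⟩ := key2core hUH hUR hMR hW hr0 (hMB.1 hb) (hMB.1 hb') habb' hA hB
      exact ⟨r, hrMR, iff_of_true h1 h2⟩
    · have hB : G.Adj r0 b' := by
        by_contra h
        exact hiff (iff_of_false hA h)
      obtain ⟨r, hrMR, h1, h2⟩ := key2core hUH hUR hMR hW hr0 (hMB.1 hb') (hMB.1 hb) habb'.symm hB hA
      exact ⟨r, hrMR, iff_of_true h2 h1⟩

end Aux2

section Aux3

variable {V : Type} {G : SimpleGraph V} {red : V → Prop}

lemma main_ext {MR MB : Set V}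
    (hUH : Ultrahomogeneous G red)
    (hUR : IsUnionOfCliques G {v | red v}) (hUB : IsUnionOfCliques G {v | ¬ red v})
    (hMR : IsMaxCliqueIn G {v | red v} MR) (hMB : IsMaxCliqueIn G {v | ¬ red v} MB)
    {S : Set V} (hSfin : S.Finite) {f : V → V} (hpf : IsPartialIso G red S f)
    (hSW : S ⊆ MR ∪ MB) (hfW : ∀ v ∈ S, f v ∈ MR ∪ MB)
    (hxr : ∃ x ∈ S, red x) (hxb : ∃ x ∈ S, ¬ red x) :
    ∃ ψ : G ≃g G, (∀ v, red (ψ v) ↔ red v) ∧ (∀ v ∈ S, ψ v = f v) ∧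
      (∀ v, v ∈ MR ↔ ψ v ∈ MR) ∧ (∀ v, v ∈ MB ↔ ψ v ∈ MB) := by
  obtain ⟨ψ, hc, hag⟩ := hUH S hSfin f hpf
  obtain ⟨x, hxS, hx⟩ := hxr
  obtain ⟨y, hyS, hy⟩ := hxb
  have hxMR : x ∈ MR := by
    rcases hSW hxS with h | h
    · exact h
    · exact absurd hx (hMB.1 h)
  have hyMB : y ∈ MB := by
    rcases hSW hyS with h | h
    · exact absurd (hMR.1 h) hy
    · exact h
  have hfx : f x ∈ MR := by
    rcases hfW x hxS with h | h
    · exact h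
    · exact absurd ((hpf.2.1 x hxS).mpr hx) (hMB.1 h)
  have hfy : f y ∈ MB := by
    rcases hfW y hyS with h | h
    · exact absurd (hMR.1 h) (fun hr => ((hpf.2.1 y hyS).mp hr) |> hy)
    · exact h
  have hψx : ψ x ∈ MR := by rw [hag x hxS]; exact hfx
  have hψy : ψ y ∈ MB := by rw [hag y hyS]; exact hfy
  refine ⟨ψ, hc, hag, ?_, ?_⟩
  · exact pres_of_fix hUR hMR ψ (fun v => (hc v).symm) hxMR hψx
  · exact pres_of_fix hUB hMB ψ (fun v => (not_iff_not.mpr (hc v)).symm) hyMB hψy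

lemma move {MR MB : Set V}
    (hUH : Ultrahomogeneous G red)
    (hUR : IsUnionOfCliques G {v | red v}) (hUB : IsUnionOfCliques G {v | ¬ red v})
    (hMR : IsMaxCliqueIn G {v | red v} MR) (hMB : IsMaxCliqueIn G {v | ¬ red v} MB)
    (hW : DWit G red) (T : Set V) (hTfin : T.Finite) (hT : T ⊆ MB)
    {b b' : V} (hb : b ∈ MB) (hb' : b' ∈ MB) (hbT : b ∉ T) (hb'T : b' ∉ T) :
    ∃ ψ : G ≃g G, (∀ v, red (ψ v) ↔ red v) ∧ (∀ t ∈ T, ψ t = t) ∧ ψ b = b' ∧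
      (∀ v, v ∈ MR ↔ ψ v ∈ MR) ∧ (∀ v, v ∈ MB ↔ ψ v ∈ MB) := by
  classical
  obtain ⟨r, hrMR, hr⟩ := key2 hUH hUR hMR hMB hW hb hb'
  have hrred : red r := hMR.1 hrMR
  have hbblue : ¬ red b := hMB.1 hb
  have hb'blue : ¬ red b' := hMB.1 hb'
  have hrb : r ≠ b := fun h => hbblue (h ▸ hrred)
  set S0 : Set V := insert b (insert r T) with hS0
  set f0 : V → V := fun v => if v = b then b' else v with hf0
  have v1 : f0 b = b' := by simp [hf0]
  have v2 : ∀ v, v ≠ b → f0 v = v := by intro v hv; simp [hf0, hv]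
  have hmem : ∀ u ∈ S0, u = b ∨ u = r ∨ u ∈ T := by
    intro u hu
    simpa [hS0, Set.mem_insert_iff] using hu
  have hTb : ∀ t ∈ T, t ≠ b := fun t ht h => hbT (h ▸ ht)
  have hTb' : ∀ t ∈ T, t ≠ b' := fun t ht h => hb'T (h ▸ ht)
  have hTr : ∀ t ∈ T, t ≠ r := fun t ht h => (h ▸ hMB.1 (hT ht)) hrred
  have hadjBlue : ∀ u ∈ MB, ∀ v ∈ MB, u ≠ v → G.Adj u v := fun u hu v hv hne =>
    hMB.2.1 hu hv hne
  have hPI : IsPartialIso G red S0 f0 := by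
    refine ⟨?_, ?_, ?_⟩
    · intro u hu v hv huv
      rcases eq_or_ne u b with hub | hub <;> rcases eq_or_ne v b with hvb | hvb
      · rw [hub, hvb]
      · rw [hub, v1, v2 v hvb] at huv
        exfalso
        rcases hmem v hv with h | h | h
        · exact hvb h
        · exact hb'blue (by rw [huv, h]; exact hrred)
        · exact hb'T (by rw [huv]; exact h)
      · rw [hvb, v1, v2 u hub] at huv
        exfalso
        rcases hmem u hu with h | h | h
        · exact hub h
        · exact hb'blue (by rw [← huv, h]; exact hrred)
        · exact hb'T (by rw [← huv]; exact h)
      · rw [v2 u hub, v2 v hvb] at huv; exact huv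
    · intro v hv
      rcases eq_or_ne v b with hvb | hvb
      · rw [hvb, v1]; exact iff_of_false hb'blue hbblue
      · rw [v2 v hvb]
    · intro u hu v hv
      rcases eq_or_ne u b with hub | hub <;> rcases eq_or_ne v b with hvb | hvb
      · rw [hub, hvb, v1]
        exact iff_of_false (G.irrefl) (G.irrefl)
      · rw [hub, v1, v2 v hvb]
        rcases hmem v hv with h | h | h
        · exact absurd h hvb
        · rw [h, G.adj_comm b' r, G.adj_comm b r]
          exact hr.symm
        · exact iff_of_true
            (hadjBlue b' hb' v (hT h) (fun e => hb'T (by rw [e]; exact h)))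
            (hadjBlue b hb v (hT h) (fun e => hbT (by rw [e]; exact h)))
      · rw [hvb, v1, v2 u hub]
        rcases hmem u hu with h | h | h
        · exact absurd h hub
        · rw [h]
          exact hr.symm
        · exact iff_of_true
            (hadjBlue u (hT h) b' hb' (fun e => hb'T (by rw [← e]; exact h)))
            (hadjBlue u (hT h) b hb (fun e => hbT (by rw [← e]; exact h)))
      · rw [v2 u hub, v2 v hvb]
  have hfin : S0.Finite := (hTfin.insert r).insert b
  have hSW : S0 ⊆ MR ∪ MB := by
    intro u hu
    rcases hmem u hu with h | h | h
    · rw [h]; exact Or.inr hb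
    · rw [h]; exact Or.inl hrMR
    · exact Or.inr (hT h)
  have hfW : ∀ u ∈ S0, f0 u ∈ MR ∪ MB := by
    intro u hu
    rcases hmem u hu with h | h | h
    · rw [h, v1]; exact Or.inr hb'
    · rw [v2 u (by rw [h]; exact hrb), h]; exact Or.inl hrMR
    · rw [v2 u (hTb u h)]; exact Or.inr (hT h)
  obtain ⟨ψ, hc, hag, hRp, hBp⟩ := main_ext hUH hUR hUB hMR hMB hfin hPI hSW hfW
    ⟨r, by simp [hS0], hrred⟩ ⟨b, by simp [hS0], hbblue⟩
  refine ⟨ψ, hc, ?_, ?_, hRp, hBp⟩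
  · intro t ht
    rw [hag t (by simp [hS0, ht]), v2 t (hTb t ht)]
  · rw [hag b (by simp [hS0]), v1]

lemma extend {MR MB : Set V}
    (hUH : Ultrahomogeneous G red)
    (hUR : IsUnionOfCliques G {v | red v}) (hUB : IsUnionOfCliques G {v | ¬ red v})
    (hMR : IsMaxCliqueIn G {v | red v} MR) (hMB : IsMaxCliqueIn G {v | ¬ red v} MB)
    (hW : DWit G red) :
    ∀ S : Finset V, ↑S ⊆ MB → ∀ f : V → V, Set.InjOn f ↑S → (∀ s ∈ S, f s ∈ MB) →
    ∃ ψ : G ≃g G, (∀ v, red (ψ v) ↔ red v) ∧ (∀ s ∈ S, ψ s = f s) ∧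
      (∀ v, v ∈ MR ↔ ψ v ∈ MR) ∧ (∀ v, v ∈ MB ↔ ψ v ∈ MB) := by
  classical
  intro S
  induction S using Finset.induction_on with
  | empty =>
    intro _ f _ _
    exact ⟨RelIso.refl G.Adj, fun v => Iff.rfl, by simp, fun v => Iff.rfl, fun v => Iff.rfl⟩
  | @insert a S' ha IH =>
    intro hS f hinj hfS
    have hS' : ↑S' ⊆ MB := fun v hv => hS (by simp [hv])
    have hinj' : Set.InjOn f ↑S' := hinj.mono (by simp [Set.subset_insert])
    have hfS' : ∀ s ∈ S', f s ∈ MB := fun s hs => hfS s (Finset.mem_insert_of_mem hs)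
    obtain ⟨ψ0, hc0, hag0, hR0, hB0⟩ := IH hS' f hinj' hfS'
    have haMB : a ∈ MB := hS (by simp)
    have hfaMB : f a ∈ MB := hfS a (Finset.mem_insert_self a S')
    have hbT : ψ0 a ∉ (f '' ↑S') := by
      rintro ⟨s, hs, heq⟩
      rw [← hag0 s hs] at heq
      exact ha (ψ0.toEquiv.injective heq ▸ hs)
    have hb'T : f a ∉ (f '' ↑S') := by
      rintro ⟨s, hs, heq⟩
      have : s = a := hinj (by simp [hs]) (by simp) heq
      exact ha (this ▸ hs)
    have hTsub : (f '' ↑S') ⊆ MB := by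
      rintro _ ⟨s, hs, rfl⟩
      exact hfS' s hs
    obtain ⟨μ, hcμ, hfixμ, hmoveμ, hRμ, hBμ⟩ := move hUH hUR hUB hMR hMB hW
      (f '' ↑S') (S'.finite_toSet.image f) hTsub ((hB0 a).mp haMB) hfaMB hbT hb'T
    refine ⟨ψ0.trans μ, ?_, ?_, ?_, ?_⟩
    · intro v
      exact (hcμ (ψ0 v)).trans (hc0 v)
    · intro s hs
      rcases Finset.mem_insert.mp hs with rfl | hs'
      · rw [RelIso.trans_apply, hmoveμ]
      · rw [RelIso.trans_apply, hag0 s hs']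
        exact hfixμ (f s) ⟨s, hs', rfl⟩
    · intro v
      exact (hR0 v).trans (hRμ (ψ0 v))
    · intro v
      exact (hB0 v).trans (hBμ (ψ0 v))

end Aux3

section Aux4

variable {V : Type} {G : SimpleGraph V} {red : V → Prop}

lemma build {MR MB : Set V}
    (S : Set ↑(MR ∪ MB)) (f : ↑(MR ∪ MB) → ↑(MR ∪ MB))
    (ψ : G ≃g G) (hc : ∀ v, red (ψ v) ↔ red v)
    (hag : ∀ x : ↑(MR ∪ MB), x ∈ S → ψ ↑x = ↑(f x))
    (hR : ∀ v, v ∈ MR ↔ ψ v ∈ MR) (hB : ∀ v, v ∈ MB ↔ ψ v ∈ MB) :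
    ∃ Ψ : (G.induce (MR ∪ MB)) ≃g (G.induce (MR ∪ MB)),
      (∀ x, red (↑(Ψ x) : V) ↔ red (↑x : V)) ∧ ∀ x ∈ S, Ψ x = f x := by
  have hWp : ∀ v, v ∈ MR ∪ MB ↔ ψ v ∈ MR ∪ MB := fun v => or_congr (hR v) (hB v)
  refine ⟨⟨⟨fun x => ⟨ψ ↑x, (hWp ↑x).mp x.2⟩,
      fun x => ⟨ψ.symm ↑x, (hWp _).mpr (by rw [RelIso.apply_symm_apply]; exact x.2)⟩,
      fun x => Subtype.ext (ψ.symm_apply_apply ↑x),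
      fun x => Subtype.ext (ψ.apply_symm_apply ↑x)⟩, ?_⟩, fun x => hc ↑x,
      fun x hx => Subtype.ext (hag x hx)⟩
  intro a b
  exact ψ.map_adj_iff

end Aux4


/-- a basic CUH graph realizing `D` and `D̃` is piecewise ultrahomogeneous. -/
theorem stmt_3 {V : Type} (G : SimpleGraph V) (red : V → Prop)
    (hG : IsBasicCUH G red)
    (hD : Realizes G red Dgraph Dred) (hDt : Realizes G red Dtilde Dred) :
    ∀ MR MB : Set V, IsMaxCliqueIn G {v | red v} MR → IsMaxCliqueIn G {v | ¬ red v} MB →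
      Ultrahomogeneous (G.induce (MR ∪ MB)) (fun x => red x.1) := by
  obtain ⟨⟨_, _, hUH, hUR, hUB⟩, -, -, -⟩ := hG
  have hW : DWit G red := dwit_of_realizes hD
  intro MR MB hMR hMB
  intro S hSfin f hpf
  classical
  set ft : V → V := fun v =>
    if h : v ∈ MR ∪ MB then (if (⟨v, h⟩ : ↑(MR ∪ MB)) ∈ S then ↑(f ⟨v, h⟩) else v) else v
    with hftdef
  have hft : ∀ x : ↑(MR ∪ MB), x ∈ S → ft ↑x = ↑(f x) := by
    intro x hx
    have hmem : (x : V) ∈ MR ∪ MB := x.2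
    simp only [hftdef, dif_pos hmem, Subtype.coe_eta, if_pos hx]
  have hfblue : ∀ x : ↑(MR ∪ MB), x ∈ S → ¬ red (↑x : V) → (↑(f x) : V) ∈ MB := by
    intro x hx hxb
    have : ¬ red (↑(f x) : V) := fun h => hxb ((hpf.2.1 x hx).mp h)
    rcases (f x).2 with h | h
    · exact absurd (hMR.1 h) this
    · exact h
  have hfred : ∀ x : ↑(MR ∪ MB), x ∈ S → red (↑x : V) → (↑(f x) : V) ∈ MR := by
    intro x hx hxr
    have : red (↑(f x) : V) := (hpf.2.1 x hx).mpr hxr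
    rcases (f x).2 with h | h
    · exact h
    · exact absurd this (hMB.1 h)
  by_cases hxb : ∃ x ∈ S, ¬ red (↑x : V)
  · by_cases hxr : ∃ x ∈ S, red (↑x : V)
    · -- mixed case
      have hSfin' : (Subtype.val '' S).Finite := hSfin.image _
      have hpf' : IsPartialIso G red (Subtype.val '' S) ft := by
        refine ⟨?_, ?_, ?_⟩
        · rintro _ ⟨x, hx, rfl⟩ _ ⟨y, hy, rfl⟩ h
          rw [hft x hx, hft y hy] at h
          exact congrArg Subtype.val (hpf.1 hx hy (Subtype.coe_injective h))
        · rintro _ ⟨x, hx, rfl⟩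
          rw [hft x hx]
          exact hpf.2.1 x hx
        · rintro _ ⟨x, hx, rfl⟩ _ ⟨y, hy, rfl⟩
          rw [hft x hx, hft y hy]
          exact hpf.2.2 x hx y hy
      obtain ⟨ψ, hc, hag, hRp, hBp⟩ := main_ext hUH hUR hUB hMR hMB hSfin' hpf'
        (by rintro _ ⟨x, _, rfl⟩; exact x.2)
        (by rintro _ ⟨x, hx, rfl⟩; rw [hft x hx]; exact (f x).2)
        (by obtain ⟨x, hx, hr⟩ := hxr; exact ⟨↑x, ⟨x, hx, rfl⟩, hr⟩)
        (by obtain ⟨x, hx, hb⟩ := hxb; exact ⟨↑x, ⟨x, hx, rfl⟩, hb⟩)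
      exact build S f ψ hc (fun x hx => (hag ↑x ⟨x, hx, rfl⟩).trans (hft x hx)) hRp hBp
    · -- all blue
      have hall : ∀ x ∈ S, ¬ red (↑x : V) := by
        push_neg at hxr
        exact hxr
      have hSfin' : (Subtype.val '' S).Finite := hSfin.image _
      set T0 : Finset V := hSfin'.toFinset with hT0def
      have hmemT : ∀ u, u ∈ T0 ↔ ∃ x ∈ S, ↑x = u := by
        intro u
        rw [hT0def, Set.Finite.mem_toFinset]
        exact Set.mem_image _ _ _
      have hT0sub : ↑T0 ⊆ MB := by
        intro u hu
        obtain ⟨x, hx, rfl⟩ := (hmemT u).mp hu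
        rcases x.2 with h | h
        · exact absurd (hMR.1 h) (hall x hx)
        · exact h
      have hinj : Set.InjOn ft ↑T0 := by
        intro u hu v hv h
        obtain ⟨x, hx, rfl⟩ := (hmemT u).mp hu
        obtain ⟨y, hy, rfl⟩ := (hmemT v).mp hv
        rw [hft x hx, hft y hy] at h
        exact congrArg Subtype.val (hpf.1 hx hy (Subtype.coe_injective h))
      have hfS : ∀ s ∈ T0, ft s ∈ MB := by
        intro s hs
        obtain ⟨x, hx, rfl⟩ := (hmemT s).mp hs
        rw [hft x hx]
        exact hfblue x hx (hall x hx)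
      obtain ⟨ψ, hc, hag, hRp, hBp⟩ := extend hUH hUR hUB hMR hMB hW T0 hT0sub ft hinj hfS
      refine build S f ψ hc ?_ hRp hBp
      intro x hx
      exact (hag ↑x ((hmemT ↑x).mpr ⟨x, hx, rfl⟩)).trans (hft x hx)
  · -- all red
    have hall : ∀ x ∈ S, red (↑x : V) := by
      push_neg at hxb
      exact hxb
    have hUH' := ultra_not hUH
    have hUR' : IsUnionOfCliques G {v : V | ¬ ¬ red v} := fun u hu v hv w hw =>
      hUR u (not_not.mp hu) v (not_not.mp hv) w (not_not.mp hw)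
    have hsetnn : {v : V | ¬ ¬ red v} = {v | red v} := Set.ext fun v => not_not
    have hMB' : IsMaxCliqueIn G {v : V | ¬ ¬ red v} MR := by rw [hsetnn]; exact hMR
    have hSfin' : (Subtype.val '' S).Finite := hSfin.image _
    set T0 : Finset V := hSfin'.toFinset with hT0def
    have hmemT : ∀ u, u ∈ T0 ↔ ∃ x ∈ S, ↑x = u := by
      intro u
      rw [hT0def, Set.Finite.mem_toFinset]
      exact Set.mem_image _ _ _
    have hT0sub : ↑T0 ⊆ MR := by
      intro u hu
      obtain ⟨x, hx, rfl⟩ := (hmemT u).mp hu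
      rcases x.2 with h | h
      · exact h
      · exact absurd (hall x hx) (hMB.1 h)
    have hinj : Set.InjOn ft ↑T0 := by
      intro u hu v hv h
      obtain ⟨x, hx, rfl⟩ := (hmemT u).mp hu
      obtain ⟨y, hy, rfl⟩ := (hmemT v).mp hv
      rw [hft x hx, hft y hy] at h
      exact congrArg Subtype.val (hpf.1 hx hy (Subtype.coe_injective h))
    have hfS : ∀ s ∈ T0, ft s ∈ MR := by
      intro s hs
      obtain ⟨x, hx, rfl⟩ := (hmemT s).mp hs
      rw [hft x hx]
      exact hfred x hx (hall x hx)
    obtain ⟨ψ, hc', hag, hRp', hBp'⟩ := extend (red := fun v => ¬ red v) (MR := MB) (MB := MR)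
      hUH' hUB hUR' hMB hMB' (dwit_swap hW) T0 hT0sub ft hinj hfS
    refine build S f ψ (fun v => not_iff_not.mp (hc' v)) ?_ hBp' hRp'
    intro x hx
    exact (hag ↑x ((hmemT ↑x).mpr ⟨x, hx, rfl⟩)).trans (hft x hx)
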